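/- For any categorical distribution θ on a finite nonempty set X, any x ∈ X, and any α₀ ∈ ℝ, the function α ↦ T(θ,α)(x) is differentiable at α₀ with derivative T(θ,α₀)(x)·( H(T(θ,α₀)||θ) − log(1/θ(x)) ). -/

import Mathlib

open Real BigOperators
open scoped Classical

variable {X : Type*}

/-- A categorical distribution on a finite set: positive everywhere and sums to 1. -/
def IsCatDist [Fintype X] (θ : X → ℝ) : Prop :=
  (∀ x, 0 < θ x) ∧ ∑ x, θ x = 1

/-- The tilt of order `α` of a categorical distribution. -/
noncomputable def tilt [Fintype X] (θ : X → ℝ) (α : ℝ) : X → ℝ :=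
  fun x => θ x ^ α / ∑ y, θ y ^ α

/-- Shannon entropy (natural log). -/
noncomputable def shannonEntropy [Fintype X] (ρ : X → ℝ) : ℝ :=
  ∑ x, ρ x * Real.log (1 / ρ x)

/-- Cross entropy `H(ρ‖θ)`. -/
noncomputable def crossEntropy [Fintype X] (ρ θ : X → ℝ) : ℝ :=
  ∑ x, ρ x * Real.log (1 / θ x)

/-- Relative entropy (KL divergence) `D(ρ‖θ)`. -/
noncomputable def relEntropy [Fintype X] (ρ θ : X → ℝ) : ℝ :=
  ∑ x, ρ x * Real.log (ρ x / θ x)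

/-- Rényi entropy of order `α`. -/
noncomputable def renyiEntropy [Fintype X] (θ : X → ℝ) (α : ℝ) : ℝ :=
  (1 / (1 - α)) * Real.log (∑ x, θ x ^ α)

/-- Varentropy. -/
noncomputable def varentropy [Fintype X] (ρ : X → ℝ) : ℝ :=
  ∑ x, ρ x * (Real.log (1 / ρ x) - shannonEntropy ρ) ^ 2

/-- Cross varentropy. -/
noncomputable def crossVarentropy [Fintype X] (ρ θ : X → ℝ) : ℝ :=
  ∑ x, ρ x * (Real.log (1 / θ x) - crossEntropy ρ θ) ^ 2

/-- Probability of an `n`-string under the i.i.d. extension of `θ`. -/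
noncomputable def strProb (θ : X → ℝ) {n : ℕ} (x : Fin n → X) : ℝ := ∏ i, θ (x i)

/-- Probability of a set of `n`-strings. -/
noncomputable def setProb [Fintype X] (θ : X → ℝ) {n : ℕ} (S : Finset (Fin n → X)) : ℝ :=
  ∑ x ∈ S, strProb θ x

/-- `θ` has a unique maximizer and a unique minimizer. -/
def UniqueExtremizers [Fintype X] (θ : X → ℝ) : Prop :=
  (∃! x : X, ∀ y, θ y ≤ θ x) ∧ (∃! x : X, ∀ y, θ x ≤ θ y)

/-- Tilted weakly typical set of order `α`. -/
noncomputable def typicalSetA [Fintype X] (θ : X → ℝ) (α : ℝ) (n : ℕ) (ε : ℝ) :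
    Finset (Fin n → X) :=
  Finset.univ.filter (fun x =>
    Real.exp (-(n : ℝ) * crossEntropy (tilt θ α) θ - n * ε) < strProb θ x ∧
    strProb θ x < Real.exp (-(n : ℝ) * crossEntropy (tilt θ α) θ + n * ε))

/-- The set `D^n_{θ,α,ε}`. -/
noncomputable def setD [Fintype X] (θ : X → ℝ) (α : ℝ) (n : ℕ) (ε : ℝ) :
    Finset (Fin n → X) :=
  Finset.univ.filter (fun x =>
    strProb (tilt θ α) x > Real.exp (-(n : ℝ) * shannonEntropy (tilt θ α) - n * |α| * ε))

/-- The set `E^n_{θ,α,ε}`. -/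
noncomputable def setE [Fintype X] (θ : X → ℝ) (α : ℝ) (n : ℕ) (ε : ℝ) :
    Finset (Fin n → X) :=
  Finset.univ.filter (fun x =>
    strProb (tilt θ α) x < Real.exp (-(n : ℝ) * shannonEntropy (tilt θ α) + n * |α| * ε))

/-- A guesswork function for `θ` on `n`-strings: a bijection onto `{1,…,|X|^n}`
that orders strings from most likely to least likely. -/
def IsGuesswork [Fintype X] (θ : X → ℝ) {n : ℕ} (G : (Fin n → X) → ℕ) : Prop :=
  Function.Injective G ∧
  (∀ x, G x ∈ Finset.Icc 1 (Fintype.card X ^ n)) ∧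
  (∀ m ∈ Finset.Icc 1 (Fintype.card X ^ n), ∃ x, G x = m) ∧
  (∀ x y, strProb θ x > strProb θ y → G x < G y)

theorem hasDerivAt_tilt [Fintype X] [Nonempty X] (θ : X → ℝ) (hθ : IsCatDist θ)
    (x : X) (α₀ : ℝ) :
    HasDerivAt (fun α : ℝ => tilt θ α x)
      (tilt θ α₀ x * (crossEntropy (tilt θ α₀) θ - Real.log (1 / θ x))) α₀ := by

  have hpos := hθ.1
  have hSpos : 0 < ∑ y, θ y ^ α₀ :=
    Finset.sum_pos (fun y _ => Real.rpow_pos_of_pos (hpos y) _) Finset.univ_nonempty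
  have hnum : HasDerivAt (fun α : ℝ => θ x ^ α) (θ x ^ α₀ * Real.log (θ x)) α₀ :=
    (Real.hasStrictDerivAt_const_rpow (hpos x) α₀).hasDerivAt
  have hden : HasDerivAt (fun α : ℝ => ∑ y, θ y ^ α) (∑ y, θ y ^ α₀ * Real.log (θ y)) α₀ :=
    HasDerivAt.fun_sum (fun y _ => (Real.hasStrictDerivAt_const_rpow (hpos y) α₀).hasDerivAt)
  have h := hnum.div hden hSpos.ne'
  refine h.congr_deriv ?_
  have hlog : ∀ y : X, Real.log (1 / θ y) = -Real.log (θ y) := fun y => by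
    rw [one_div, Real.log_inv]
  unfold tilt crossEntropy
  simp only [hlog]
  have key : ∑ y, (θ y ^ α₀ / ∑ z, θ z ^ α₀) * -Real.log (θ y)
      = -(∑ y, θ y ^ α₀ * Real.log (θ y)) / ∑ z, θ z ^ α₀ := by
    rw [neg_div, Finset.sum_div, ← Finset.sum_neg_distrib]
    congr 1; ext y; ring
  rw [key]
  field_simp
  ring
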